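/- arXiv:2310.11137 — 2 statements merged into one kernel-verified Lean document; each statement's English description precedes it below -/
import Mathlib

section
/- Let φ, ψ : ℝ → ℝ be functions satisfying ψ(α)·φ(α) = α·φ'(0⁺) for all α > 0, with both functions (k+1)-times differentiable on a right neighborhood of 0 with one-sided derivatives extending continuously to 0, φ(0)=0, and φ'(0⁺) ≠ 0. Writing ψ_i and φ_i for the i-th right derivatives at 0, the identity ψ_k = -(1/((k+1)·φ_1)) · ∑_{i=0}^{k-1} C(k+1,i) · ψ_i · φ_{k+1-i} holds for every k ≥ 1. -/
open Finset Set

private lemma pascal_sum (a b : ℕ → ℝ) (n : ℕ) :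
    ∑ i ∈ range (n + 1), (n.choose i : ℝ) * (a (i + 1) * b (n - i) + a i * b (n + 1 - i)) =
    ∑ i ∈ range (n + 2), ((n + 1).choose i : ℝ) * (a i * b (n + 1 - i)) := by
  have h1 : ∑ i ∈ range (n + 2), ((n + 1).choose i : ℝ) * (a i * b (n + 1 - i))
      = ∑ i ∈ range (n + 1), ((n + 1).choose (i + 1) : ℝ) * (a (i + 1) * b (n - i))
        + a 0 * b (n + 1) := by
    rw [Finset.sum_range_succ']
    simp [Nat.succ_sub_succ]
  have h2 : ∑ i ∈ range (n + 1), (n.choose i : ℝ) * (a i * b (n + 1 - i))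
      = ∑ i ∈ range n, (n.choose (i + 1) : ℝ) * (a (i + 1) * b (n - i)) + a 0 * b (n + 1) := by
    rw [Finset.sum_range_succ']
    simp [Nat.succ_sub_succ]
  have h3 : ∑ i ∈ range (n + 1), (n.choose (i + 1) : ℝ) * (a (i + 1) * b (n - i))
      = ∑ i ∈ range n, (n.choose (i + 1) : ℝ) * (a (i + 1) * b (n - i)) := by
    rw [Finset.sum_range_succ]
    simp [Nat.choose_succ_self]
  calc ∑ i ∈ range (n + 1), (n.choose i : ℝ) * (a (i + 1) * b (n - i) + a i * b (n + 1 - i))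
      = ∑ i ∈ range (n + 1), (n.choose i : ℝ) * (a (i + 1) * b (n - i))
        + ∑ i ∈ range (n + 1), (n.choose i : ℝ) * (a i * b (n + 1 - i)) := by
        rw [← Finset.sum_add_distrib]; apply Finset.sum_congr rfl; intro i _; ring
    _ = ∑ i ∈ range (n + 1), (n.choose i : ℝ) * (a (i + 1) * b (n - i))
        + (∑ i ∈ range (n + 1), (n.choose (i + 1) : ℝ) * (a (i + 1) * b (n - i))
          + a 0 * b (n + 1)) := by rw [h2, h3]
    _ = ∑ i ∈ range (n + 1), ((n + 1).choose (i + 1) : ℝ) * (a (i + 1) * b (n - i))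
        + a 0 * b (n + 1) := by
        rw [← add_assoc, ← Finset.sum_add_distrib]
        congr 1
        apply Finset.sum_congr rfl
        intro i _
        rw [Nat.choose_succ_succ, Nat.cast_add]
        ring
    _ = _ := h1.symm

private lemma leibniz_iter {s : Set ℝ} (hs : UniqueDiffOn ℝ s) (n : ℕ) :
    ∀ {f g : ℝ → ℝ}, ContDiffOn ℝ n f s → ContDiffOn ℝ n g s → ∀ x ∈ s,
      iteratedDerivWithin n (fun y => f y * g y) s x =
        ∑ i ∈ range (n + 1), (n.choose i : ℝ) *
          (iteratedDerivWithin i f s x * iteratedDerivWithin (n - i) g s x) := by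
  induction n with
  | zero => intro f g _ _ x hx; simp
  | succ n IH =>
    intro f g hf hg x hx
    have hfn : ContDiffOn ℝ n f s := hf.of_le (by exact_mod_cast Nat.le_succ n)
    have hgn : ContDiffOn ℝ n g s := hg.of_le (by exact_mod_cast Nat.le_succ n)
    have hEq : Set.EqOn (iteratedDerivWithin n (fun y => f y * g y) s)
        (fun y => ∑ i ∈ range (n + 1), (n.choose i : ℝ) *
          (iteratedDerivWithin i f s y * iteratedDerivWithin (n - i) g s y)) s :=
      fun y hy => IH hfn hgn y hy
    rw [iteratedDerivWithin_succ, derivWithin_congr hEq (hEq hx)]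
    have key : HasDerivWithinAt
        (fun y => ∑ i ∈ range (n + 1), (n.choose i : ℝ) *
          (iteratedDerivWithin i f s y * iteratedDerivWithin (n - i) g s y))
        (∑ i ∈ range (n + 1), (n.choose i : ℝ) *
          (iteratedDerivWithin (i + 1) f s x * iteratedDerivWithin (n - i) g s x
            + iteratedDerivWithin i f s x * iteratedDerivWithin (n - i + 1) g s x)) s x := by
      apply HasDerivWithinAt.fun_sum
      intro i hi
      rw [Finset.mem_range] at hi
      have hdf : HasDerivWithinAt (iteratedDerivWithin i f s)
          (iteratedDerivWithin (i + 1) f s x) s x := by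
        have hdiff := (hf.differentiableOn_iteratedDerivWithin
          (by exact_mod_cast hi) hs) x hx
        have := hdiff.hasDerivWithinAt
        rwa [← iteratedDerivWithin_succ] at this
      have hdg : HasDerivWithinAt (iteratedDerivWithin (n - i) g s)
          (iteratedDerivWithin (n - i + 1) g s x) s x := by
        have hni : (n - i : ℕ) < (n + 1 : ℕ) := by omega
        have hdiff := (hg.differentiableOn_iteratedDerivWithin
          (by exact_mod_cast hni) hs) x hx
        have := hdiff.hasDerivWithinAt
        rwa [← iteratedDerivWithin_succ] at this
      exact (hdf.mul hdg).const_mul _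
    rw [key.derivWithin (hs.uniqueDiffWithinAt hx)]
    have hcong : ∑ i ∈ range (n + 1), (n.choose i : ℝ) *
          (iteratedDerivWithin (i + 1) f s x * iteratedDerivWithin (n - i) g s x
            + iteratedDerivWithin i f s x * iteratedDerivWithin (n - i + 1) g s x)
        = ∑ i ∈ range (n + 1), (n.choose i : ℝ) *
          (iteratedDerivWithin (i + 1) f s x * iteratedDerivWithin (n - i) g s x
            + iteratedDerivWithin i f s x * iteratedDerivWithin (n + 1 - i) g s x) := by
      apply Finset.sum_congr rfl
      intro i hi
      rw [Finset.mem_range] at hi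
      have : n - i + 1 = n + 1 - i := by omega
      rw [this]
    rw [hcong, pascal_sum (fun i => iteratedDerivWithin i f s x)
      (fun j => iteratedDerivWithin j g s x) n]

private lemma iter_const_zero {s : Set ℝ} (hs : UniqueDiffOn ℝ s) (c : ℝ) (n : ℕ) :
    ∀ x ∈ s, iteratedDerivWithin (n + 1) (fun _ => c) s x = 0 := by
  induction n with
  | zero =>
    intro x hx
    rw [iteratedDerivWithin_one,
      derivWithin_fun_const, Pi.zero_apply]
  | succ n IH =>
    intro x hx
    rw [iteratedDerivWithin_succ,
      derivWithin_congr (fun y hy => IH y hy) (IH x hx)]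
    exact congrFun (derivWithin_fun_const s 0) x

/-- Takács' recursion (algebraic core): if `ψ(α)φ(α) = α φ'(0⁺)` for `α > 0`,
with both functions `(k+1)`-times continuously differentiable from the right at `0`,
`φ(0) = 0` and `φ'(0⁺) ≠ 0`, then the `k`-th right derivative of `ψ` at `0` satisfies
`ψ_k = -(1/((k+1)φ₁)) ∑_{i=0}^{k-1} C(k+1,i) ψ_i φ_{k+1-i}`. -/
theorem stmt_0 (φ ψ : ℝ → ℝ) (k : ℕ) (hk : 1 ≤ k)
    (hφ : ContDiffOn ℝ (k + 1) φ (Set.Ici (0:ℝ)))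
    (hψ : ContDiffOn ℝ (k + 1) ψ (Set.Ici (0:ℝ)))
    (hφ0 : φ 0 = 0)
    (hφ1 : iteratedDerivWithin 1 φ (Set.Ici (0:ℝ)) 0 ≠ 0)
    (hid : ∀ α : ℝ, 0 < α → ψ α * φ α = α * iteratedDerivWithin 1 φ (Set.Ici (0:ℝ)) 0) :
    iteratedDerivWithin k ψ (Set.Ici (0:ℝ)) 0 =
      -(1 / ((k + 1 : ℝ) * iteratedDerivWithin 1 φ (Set.Ici (0:ℝ)) 0)) *
        ∑ i ∈ range k, (Nat.choose (k + 1) i : ℝ) *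
          iteratedDerivWithin i ψ (Set.Ici (0:ℝ)) 0 *
          iteratedDerivWithin (k + 1 - i) φ (Set.Ici (0:ℝ)) 0 := by
  set s : Set ℝ := Set.Ici (0:ℝ) with hsdef
  have hs : UniqueDiffOn ℝ s := uniqueDiffOn_Ici 0
  have h0s : (0:ℝ) ∈ s := Set.self_mem_Ici
  set c : ℝ := iteratedDerivWithin 1 φ s 0 with hc
  -- the product equals the linear function on s
  have hEq : Set.EqOn (fun α => ψ α * φ α) (fun α => α * c) s := by
    intro α hα
    rcases eq_or_lt_of_le (by rw [hsdef] at hα; exact hα : (0:ℝ) ≤ α) with h | h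
    · simp only [← h, hφ0, mul_zero, zero_mul]
    · exact hid α h
  -- k+1 derivative of linear function vanishes
  have hlin : iteratedDerivWithin (k + 1) (fun α : ℝ => α * c) s 0 = 0 := by
    obtain ⟨m, rfl⟩ : ∃ m, k = m + 1 := ⟨k - 1, by omega⟩
    rw [show m + 1 + 1 = (m + 1) + 1 from rfl, iteratedDerivWithin_succ']
    have hdc : Set.EqOn (derivWithin (fun α : ℝ => α * c) s) (fun _ => c) s := by
      intro y hy
      exact ((hasDerivWithinAt_id y s).mul_const c).derivWithin (hs.uniqueDiffWithinAt hy) |>.trans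
        (by simp)
    rw [iteratedDerivWithin_congr hdc h0s]
    exact iter_const_zero hs c m 0 h0s
  -- Leibniz
  have hleib := leibniz_iter hs (k + 1) hψ hφ 0 h0s
  have hzero : iteratedDerivWithin (k + 1) (fun y => ψ y * φ y) s 0 = 0 := by
    rw [iteratedDerivWithin_congr hEq h0s, hlin]
  rw [hleib] at hzero
  -- split off the top two terms
  rw [Finset.sum_range_succ, Finset.sum_range_succ] at hzero
  have e1 : k + 1 - (k + 1) = 0 := by omega
  have e2 : k + 1 - k = 1 := by omega
  rw [e1, e2] at hzero
  have hφ00 : iteratedDerivWithin 0 φ s 0 = 0 := by simpa using hφ0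
  rw [hφ00, mul_zero, mul_zero, add_zero] at hzero
  have hch : ((k + 1).choose k : ℝ) = (k : ℝ) + 1 := by
    rw [Nat.choose_succ_self_right]; push_cast; ring
  rw [hch] at hzero
  -- solve for ψ_k
  have hne : ((k : ℝ) + 1) * c ≠ 0 :=
    mul_ne_zero (by positivity) hφ1
  have hsum : ∑ i ∈ range k, ((k + 1).choose i : ℝ) *
      iteratedDerivWithin i ψ s 0 * iteratedDerivWithin (k + 1 - i) φ s 0
      = ∑ i ∈ range k, ((k + 1).choose i : ℝ) *
      (iteratedDerivWithin i ψ s 0 * iteratedDerivWithin (k + 1 - i) φ s 0) := by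
    apply Finset.sum_congr rfl; intro i _; ring
  rw [hsum]
  field_simp
  linarith [hzero]
end

section
/- Fix a real number 𝔯 > 0 and let ζ be an exponential random variable with rate 𝔯, independent of a nonnegative random variable V with finite moments μ_j = E[V^j] and of U uniform on [0,1]. Then for every nonnegative integer k, E[V·(ζ + V·U)^k] = ∑_{i=0}^{k} (k! / ((k-i)! · (k-i+1))) · μ_{k-i+1} · 𝔯^{-i}. -/
open MeasureTheory ProbabilityTheory Finset

open MeasureTheory ProbabilityTheory Finset Real Set
open scoped ENNReal NNReal

lemma expPDF_smul (r : ℝ) (hr : 0 < r) (i : ℕ) :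
    ∀ x : ℝ, (Real.toNNReal (exponentialPDFReal r x) : ℝ) • (x ^ i) =
      Set.indicator (Set.Ici (0:ℝ)) (fun x => exponentialPDFReal r x * x ^ i) x := by
  intro x
  by_cases hx : 0 ≤ x
  · rw [Set.indicator_of_mem (Set.mem_Ici.mpr hx)]
    rw [Real.coe_toNNReal _ (exponentialPDFReal_nonneg hr x), smul_eq_mul]
  · have h0 : exponentialPDFReal r x = 0 := by
      unfold exponentialPDFReal gammaPDFReal
      rw [if_neg hx]
    rw [Set.indicator_of_notMem (by simpa using hx), h0]
    simp

lemma exp_int_Ioi (r : ℝ) (hr : 0 < r) (i : ℕ) :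
    IntegrableOn (fun x : ℝ => exponentialPDFReal r x * x ^ i) (Set.Ioi 0) := by
  have h := integrableOn_rpow_mul_exp_neg_mul_rpow (p := 1) (s := (i:ℝ)) (b := r)
    (by exact lt_of_lt_of_le (by norm_num) (Nat.cast_nonneg i)) zero_lt_one hr
  have h' : IntegrableOn (fun x : ℝ => x ^ i * Real.exp (-(r * x))) (Set.Ioi 0) := by
    refine IntegrableOn.congr_fun h (fun x hx => ?_) measurableSet_Ioi
    rw [Real.rpow_natCast, Real.rpow_one, neg_mul]
  refine IntegrableOn.congr_fun (h'.const_mul r) (fun x hx => ?_) measurableSet_Ioi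
  unfold exponentialPDFReal gammaPDFReal
  rw [if_pos (le_of_lt hx)]
  simp only [Real.rpow_one, Real.Gamma_one, Real.rpow_natCast, sub_self, Real.rpow_zero,
    pow_zero, mul_one, div_one]
  ring

lemma exp_density : ∀ r : ℝ, expMeasure r = volume.withDensity
    (fun x => ((Real.toNNReal (exponentialPDFReal r x) : ℝ≥0) : ℝ≥0∞)) := by
  intro r
  rfl

lemma exp_moment_int (r : ℝ) (hr : 0 < r) (i : ℕ) :
    Integrable (fun x : ℝ => x ^ i) (expMeasure r) := by
  rw [exp_density, integrable_withDensity_iff_integrable_smul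
    ((measurable_exponentialPDFReal r).real_toNNReal)]
  have : (fun x : ℝ => (Real.toNNReal (exponentialPDFReal r x)) • (x ^ i)) =
      Set.indicator (Set.Ici (0:ℝ)) (fun x => exponentialPDFReal r x * x ^ i) := by
    funext x; exact expPDF_smul r hr i x
  rw [this, integrable_indicator_iff measurableSet_Ici,
    integrableOn_Ici_iff_integrableOn_Ioi]
  exact exp_int_Ioi r hr i

lemma exp_moment (r : ℝ) (hr : 0 < r) (i : ℕ) :
    ∫ x, x ^ i ∂(expMeasure r) = (Nat.factorial i : ℝ) / r ^ i := by
  rw [exp_density, integral_withDensity_eq_integral_smul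
    ((measurable_exponentialPDFReal r).real_toNNReal)]
  have h1 : (fun x : ℝ => (Real.toNNReal (exponentialPDFReal r x)) • (x ^ i)) =
      Set.indicator (Set.Ici (0:ℝ)) (fun x => exponentialPDFReal r x * x ^ i) := by
    funext x; exact expPDF_smul r hr i x
  rw [h1, integral_indicator measurableSet_Ici, integral_Ici_eq_integral_Ioi]
  have h2 : ∫ x in Set.Ioi (0:ℝ), exponentialPDFReal r x * x ^ i =
      r * ∫ t in Set.Ioi (0:ℝ), t ^ ((i + 1 : ℝ) - 1) * Real.exp (-(r * t)) := by
    rw [← integral_const_mul]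
    refine setIntegral_congr_fun measurableSet_Ioi (fun x hx => ?_)
    unfold exponentialPDFReal gammaPDFReal
    rw [if_pos (le_of_lt hx)]
    have : ((i + 1 : ℝ) - 1) = (i : ℝ) := by ring
    rw [this, Real.rpow_natCast]
    simp only [Real.rpow_one, Real.Gamma_one, sub_self, Real.rpow_zero, pow_zero, mul_one,
      div_one]
    ring
  rw [h2, integral_rpow_mul_exp_neg_mul_Ioi (by positivity) hr]
  rw [show ((i:ℝ)+1) = ((i+1 : ℕ) : ℝ) by push_cast; ring, Real.rpow_natCast]
  rw [Nat.cast_add, Nat.cast_one, Real.Gamma_nat_eq_factorial]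
  rw [div_pow, one_pow, pow_succ]
  field_simp

lemma unif_moment_int (j : ℕ) :
    Integrable (fun x : ℝ => x ^ j) (volume.restrict (Set.Icc (0:ℝ) 1)) :=
  (continuous_pow j).integrableOn_Icc

lemma unif_moment (j : ℕ) :
    ∫ x, x ^ j ∂(volume.restrict (Set.Icc (0:ℝ) 1)) = 1 / ((j:ℝ) + 1) := by
  rw [Measure.restrict_congr_set Ioc_ae_eq_Icc.symm,
    ← intervalIntegral.integral_of_le (by norm_num : (0:ℝ) ≤ 1), integral_pow]
  simp


/-- Brownian-case specialization: if `ζ` is exponential with rate `𝔯 > 0`, independent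
of `V ≥ 0` (with finite moments `μ_j = E[V^j]`) and of `U` uniform on `[0,1]`, then
`E[V·(ζ + V·U)^k] = ∑_{i=0}^{k} (k!/((k-i)!·(k-i+1)))·μ_{k-i+1}·𝔯^{-i}`. -/
theorem stmt_6 {Ω : Type*} [MeasurableSpace Ω] (μ : Measure Ω) [IsProbabilityMeasure μ]
    (r : ℝ) (hr : 0 < r)
    (ζ V U : Ω → ℝ) (hζ : Measurable ζ) (hV : Measurable V) (hU : Measurable U)
    (hVpos : 0 ≤ᵐ[μ] V)
    (hExp : Measure.map ζ μ = ProbabilityTheory.expMeasure r)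
    (hUnif : Measure.map U μ = volume.restrict (Set.Icc (0:ℝ) 1))
    (hIndep : iIndepFun ![ζ, V, U] μ)
    (hVmom : ∀ j : ℕ, Integrable (fun ω => V ω ^ j) μ)
    (k : ℕ) :
    ∫ ω, V ω * (ζ ω + V ω * U ω) ^ k ∂μ =
      ∑ i ∈ range (k + 1),
        ((Nat.factorial k : ℝ) / ((Nat.factorial (k - i) : ℝ) * ((k - i + 1 : ℕ) : ℝ))) *
          (∫ ω, V ω ^ (k - i + 1) ∂μ) * r ^ (-(i : ℤ)) := by
  have hζint : ∀ i : ℕ, Integrable (fun ω => ζ ω ^ i) μ := by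
    intro i
    have h := exp_moment_int r hr i
    rw [← hExp] at h
    exact (integrable_map_measure (measurable_id.pow_const i).aestronglyMeasurable
      hζ.aemeasurable).mp h
  have hζmom : ∀ i : ℕ, ∫ ω, ζ ω ^ i ∂μ = (Nat.factorial i : ℝ) / r ^ i := by
    intro i
    rw [← exp_moment r hr i, ← hExp]
    exact (integral_map hζ.aemeasurable
      (measurable_id.pow_const i).aestronglyMeasurable).symm
  have hUint : ∀ j : ℕ, Integrable (fun ω => U ω ^ j) μ := by
    intro j
    have h := unif_moment_int j
    rw [← hUnif] at h
    exact (integrable_map_measure (measurable_id.pow_const j).aestronglyMeasurable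
      hU.aemeasurable).mp h
  have hUmom : ∀ j : ℕ, ∫ ω, U ω ^ j ∂μ = 1 / ((j:ℝ) + 1) := by
    intro j
    rw [← unif_moment j, ← hUnif]
    exact (integral_map hU.aemeasurable
      (measurable_id.pow_const j).aestronglyMeasurable).symm
  -- per-index data
  have key : ∀ i : ℕ, i ≤ k →
      Integrable (fun ω => ζ ω ^ i * (V ω ^ (k - i + 1) * U ω ^ (k - i))) μ ∧
      ∫ ω, ζ ω ^ i * (V ω ^ (k - i + 1) * U ω ^ (k - i)) ∂μ =
        (∫ ω, ζ ω ^ i ∂μ) * ((∫ ω, V ω ^ (k - i + 1) ∂μ) * (∫ ω, U ω ^ (k - i) ∂μ)) := by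
    intro i hi
    have hF : iIndepFun
        ![fun ω => ζ ω ^ i, fun ω => V ω ^ (k - i + 1), fun ω => U ω ^ (k - i)] μ := by
      have hc := hIndep.comp (fun l => fun x : ℝ => x ^ (![i, k - i + 1, k - i] l))
        (fun l => measurable_id.pow_const _)
      have he : (![fun ω => ζ ω ^ i, fun ω => V ω ^ (k - i + 1), fun ω => U ω ^ (k - i)] :
          Fin 3 → Ω → ℝ) =
          fun l => (fun x : ℝ => x ^ (![i, k - i + 1, k - i] l)) ∘ (![ζ, V, U] l) := by
        funext l
        fin_cases l <;> rfl
      rw [he]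
      exact hc
    have hFmeas : ∀ l, Measurable
        ((![fun ω => ζ ω ^ i, fun ω => V ω ^ (k - i + 1), fun ω => U ω ^ (k - i)] :
          Fin 3 → Ω → ℝ) l) := by
      intro l
      fin_cases l
      exacts [hζ.pow_const _, hV.pow_const _, hU.pow_const _]
    have h12 : IndepFun (fun ω => V ω ^ (k - i + 1)) (fun ω => U ω ^ (k - i)) μ := by
      have := hF.indepFun (i := 1) (j := 2) (by decide)
      simpa using this
    have h0 : IndepFun (fun ω => ζ ω ^ i)
        ((fun ω => V ω ^ (k - i + 1)) * (fun ω => U ω ^ (k - i))) μ := by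
      have := hF.indepFun_mul_right hFmeas 0 1 2 (by decide) (by decide)
      simpa using this
    have hInt12 : Integrable ((fun ω => V ω ^ (k - i + 1)) * (fun ω => U ω ^ (k - i))) μ :=
      h12.integrable_mul (hVmom _) (hUint _)
    have hIntAll : Integrable ((fun ω => ζ ω ^ i) *
        ((fun ω => V ω ^ (k - i + 1)) * (fun ω => U ω ^ (k - i)))) μ :=
      h0.integrable_mul (hζint i) hInt12
    constructor
    · exact hIntAll
    · have e1 := h0.integral_mul_eq_mul_integral (hζint i).1 hInt12.1
      have e2 := h12.integral_mul_eq_mul_integral (hVmom _).1 (hUint _).1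
      calc ∫ ω, ζ ω ^ i * (V ω ^ (k - i + 1) * U ω ^ (k - i)) ∂μ
          = ∫ ω, ((fun ω => ζ ω ^ i) *
              ((fun ω => V ω ^ (k - i + 1)) * (fun ω => U ω ^ (k - i)))) ω ∂μ := rfl
        _ = (∫ ω, ζ ω ^ i ∂μ) * ((∫ ω, V ω ^ (k - i + 1) ∂μ) * (∫ ω, U ω ^ (k - i) ∂μ)) := by
            rw [e1, e2]
  -- pointwise binomial expansion
  have hpt : (fun ω => V ω * (ζ ω + V ω * U ω) ^ k) =
      fun ω => ∑ i ∈ range (k + 1),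
        (k.choose i : ℝ) * (ζ ω ^ i * (V ω ^ (k - i + 1) * U ω ^ (k - i))) := by
    funext ω
    rw [add_pow, Finset.mul_sum]
    refine Finset.sum_congr rfl fun i hi => ?_
    rw [mul_pow, pow_succ]
    ring
  rw [hpt, integral_finset_sum _ (fun i hi =>
    ((key i (Nat.lt_succ_iff.mp (mem_range.mp hi))).1.const_mul _))]
  refine Finset.sum_congr rfl fun i hi => ?_
  have hik : i ≤ k := Nat.lt_succ_iff.mp (mem_range.mp hi)
  rw [integral_const_mul, (key i hik).2, hζmom i, hUmom (k - i)]
  have hch : (k.choose i : ℝ) = (k.factorial : ℝ) /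
      ((i.factorial : ℝ) * ((k - i).factorial : ℝ)) := Nat.cast_choose ℝ hik
  have hz : r ^ (-(i : ℤ)) = (r ^ i)⁻¹ := by
    rw [zpow_neg, zpow_natCast]
  have hcast : ((k - i + 1 : ℕ) : ℝ) = ((k - i : ℕ) : ℝ) + 1 := by push_cast; ring
  rw [hz, hcast]
  generalize (∫ ω, V ω ^ (k - i + 1) ∂μ) = Mv
  have h1 : ((Nat.factorial i : ℝ)) ≠ 0 := Nat.cast_ne_zero.mpr i.factorial_ne_zero
  have h2 : (((k - i).factorial : ℝ)) ≠ 0 := Nat.cast_ne_zero.mpr (k - i).factorial_ne_zero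
  have h3 : ((k - i : ℕ) : ℝ) + 1 ≠ 0 := by positivity
  have h4 : r ^ i ≠ 0 := pow_ne_zero _ (ne_of_gt hr)
  have hc2 : (k.choose i : ℝ) * (Nat.factorial i : ℝ) =
      (k.factorial : ℝ) / ((k - i).factorial : ℝ) := by
    rw [hch]
    field_simp
  calc (k.choose i : ℝ) * ((Nat.factorial i : ℝ) / r ^ i * (Mv * (1 / (((k - i : ℕ) : ℝ) + 1))))
      = ((k.choose i : ℝ) * (Nat.factorial i : ℝ)) * Mv /
          (r ^ i * (((k - i : ℕ) : ℝ) + 1)) := by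
        field_simp
    _ = ((k.factorial : ℝ) / ((k - i).factorial : ℝ)) * Mv /
          (r ^ i * (((k - i : ℕ) : ℝ) + 1)) := by rw [hc2]
    _ = (k.factorial : ℝ) / (((k - i).factorial : ℝ) * (((k - i : ℕ) : ℝ) + 1)) * Mv *
          (r ^ i)⁻¹ := by
        field_simp
end
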